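/- arXiv:1208.3554 — 3 statements merged into one kernel-verified Lean document; each statement's English description precedes it below -/
import Mathlib

section
/- Let G be a group and let K be a subgroup of G such that gKg⁻¹ is commensurate with K for all g ∈ G. Let N be a subgroup of K of finite index and let g ∈ G. Then there exists a subgroup M of N such that M is an intersection of finitely many conjugates of N (i.e., there is a finite subset S of G with M equal to the intersection over s ∈ S of sNs⁻¹), and such that for all h ∈ G, the set gN ∩ Nh is a union of left cosets of M (i.e., for every x ∈ gN ∩ Nh, the left coset xM is contained in gN ∩ Nh). -/
/-- The left coset `gN` of a subgroup `N`, as a set. -/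
def lCoset {G : Type*} [Group G] (g : G) (N : Subgroup G) : Set G :=
  (g * ·) '' (N : Set G)

/-- The right coset `Ng` of a subgroup `N`, as a set. -/
def rCoset {G : Type*} [Group G] (N : Subgroup G) (g : G) : Set G :=
  (· * g) '' (N : Set G)

lemma relindex_map_mulEquiv {G : Type*} [Group G] (e : G ≃* G) (H K : Subgroup G) :
    (H.map e.toMonoidHom).relIndex (K.map e.toMonoidHom) = H.relIndex K := by
  rw [← Subgroup.relIndex_comap, Subgroup.comap_map_eq_self_of_injective e.injective]

lemma mem_lCoset_iff {G : Type*} [Group G] {g y : G} {N : Subgroup G} :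
    y ∈ lCoset g N ↔ g⁻¹ * y ∈ N := by
  constructor
  · rintro ⟨n, hn, rfl⟩; simpa using hn
  · intro hy; exact ⟨g⁻¹ * y, hy, by group⟩

lemma mem_rCoset_iff {G : Type*} [Group G] {h y : G} {N : Subgroup G} :
    y ∈ rCoset N h ↔ y * h⁻¹ ∈ N := by
  constructor
  · rintro ⟨n, hn, rfl⟩; simpa using hn
  · intro hy; exact ⟨y * h⁻¹, hy, by group⟩

/-- Let `G` be a group and `K` a subgroup such that `gKg⁻¹` is commensurate with `K` for
all `g ∈ G`.  Let `N` be a finite-index subgroup of `K` and let `g ∈ G`.  Then there is a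
subgroup `M` of `N` which is an intersection of finitely many conjugates of `N`, such
that for all `h : G` the set `gN ∩ Nh` is a union of left cosets of `M`. -/
theorem exists_finite_conj_inter_union_of_left_cosets {G : Type*} [Group G]
    (K : Subgroup G)
    (hcomm : ∀ g : G, Subgroup.Commensurable (Subgroup.map (MulAut.conj g).toMonoidHom K) K)
    (N : Subgroup G) (hNK : N ≤ K) (hN : N.relIndex K ≠ 0) (g : G) :
    ∃ M : Subgroup G, M ≤ N ∧
      (∃ S : Finset G, M = ⨅ s ∈ S, Subgroup.map (MulAut.conj s).toMonoidHom N) ∧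
      ∀ h : G, ∀ x ∈ lCoset g N ∩ rCoset N h,
        lCoset x M ⊆ lCoset g N ∩ rCoset N h := by
  classical
  set D := Subgroup.map (MulAut.conj g⁻¹).toMonoidHom N with hDdef
  -- D = g⁻¹ N g has finite index in N
  have h1 : D.relIndex (Subgroup.map (MulAut.conj g⁻¹).toMonoidHom K) ≠ 0 := by
    rw [hDdef, relindex_map_mulEquiv]; exact hN
  have h2 : (Subgroup.map (MulAut.conj g⁻¹).toMonoidHom K).relIndex K ≠ 0 :=
    (hcomm g⁻¹).1
  have h3 : D.relIndex K ≠ 0 := Subgroup.relIndex_ne_zero_trans h1 h2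
  have h4 : K.relIndex N ≠ 0 := by
    rw [Subgroup.relIndex_eq_one.mpr hNK]; exact one_ne_zero
  have hDN : D.relIndex N ≠ 0 := Subgroup.relIndex_ne_zero_trans h3 h4
  haveI hfin : Finite (N ⧸ D.subgroupOf N) := Nat.finite_of_card_ne_zero hDN
  haveI : Fintype (N ⧸ D.subgroupOf N) := Fintype.ofFinite _
  -- the finite set of conjugating elements
  set S : Finset G :=
    insert 1 (Finset.image
      (fun q : N ⧸ D.subgroupOf N => ((Quotient.out q : N) : G) * g⁻¹) Finset.univ) with hS
  set M : Subgroup G := ⨅ s ∈ S, Subgroup.map (MulAut.conj s).toMonoidHom N with hM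
  have hMN : M ≤ N := by
    have h1S : (1 : G) ∈ S := Finset.mem_insert_self _ _
    have := biInf_le (fun s => Subgroup.map (MulAut.conj s).toMonoidHom N) h1S
    refine le_trans this ?_
    intro x hx
    rcases hx with ⟨y, hy, rfl⟩
    simpa using hy
  -- key: M is contained in every conjugate (n g⁻¹) N (n g⁻¹)⁻¹ for n ∈ N
  have key : ∀ n ∈ N, ∀ m ∈ M, g * n⁻¹ * m * n * g⁻¹ ∈ N := by
    intro n hn m hm
    set q : N ⧸ D.subgroupOf N := QuotientGroup.mk ⟨n, hn⟩ with hq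
    set t : G := ((Quotient.out q : N) : G) with ht
    obtain ⟨d, hd'⟩ := QuotientGroup.mk_out_eq_mul (D.subgroupOf N) (⟨n, hn⟩ : N)
    have hrep : t⁻¹ * n ∈ D := by
      have hdD : ((d : N) : G) ∈ D := d.2
      have htn : t = n * ((d : N) : G) := by
        rw [ht, hq, hd']; rfl
      have : t⁻¹ * n = ((d : N) : G)⁻¹ := by rw [htn]; group
      rw [this]
      exact D.inv_mem hdD
    have hd : g * (t⁻¹ * n) * g⁻¹ ∈ N := by
      rw [hDdef, Subgroup.mem_map_equiv, MulAut.conj_symm_apply] at hrep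
      simpa [mul_assoc] using hrep
    have hsS : t * g⁻¹ ∈ S := by
      refine Finset.mem_insert_of_mem ?_
      exact Finset.mem_image.mpr ⟨q, Finset.mem_univ _, rfl⟩
    have hmconj : m ∈ Subgroup.map (MulAut.conj (t * g⁻¹)).toMonoidHom N :=
      biInf_le (fun s => Subgroup.map (MulAut.conj s).toMonoidHom N) hsS hm
    rw [Subgroup.mem_map_equiv, MulAut.conj_symm_apply] at hmconj
    have ha : g * t⁻¹ * m * t * g⁻¹ ∈ N := by
      simpa [mul_assoc, mul_inv_rev] using hmconj
    have hcalc : g * n⁻¹ * m * n * g⁻¹ =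
        (g * (t⁻¹ * n) * g⁻¹)⁻¹ * (g * t⁻¹ * m * t * g⁻¹) * (g * (t⁻¹ * n) * g⁻¹) := by
      group
    rw [hcalc]
    exact N.mul_mem (N.mul_mem (N.inv_mem hd) ha) hd
  refine ⟨M, hMN, ⟨S, hM⟩, ?_⟩
  intro h x hx y hy
  rcases hy with ⟨m, hm, rfl⟩
  obtain ⟨hxl, hxr⟩ := hx
  rw [mem_lCoset_iff] at hxl
  rw [mem_rCoset_iff] at hxr
  constructor
  · rw [mem_lCoset_iff, ← mul_assoc]
    exact N.mul_mem hxl (hMN hm)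
  · rw [mem_rCoset_iff]
    set n : G := g⁻¹ * x with hn
    have hnN : n ∈ N := hxl
    have hkey : g * n * m * n⁻¹ * g⁻¹ ∈ N := by
      have := key n⁻¹ (N.inv_mem hnN) m hm
      simpa using this
    have hcalc : x * m * h⁻¹ = (g * n * m * n⁻¹ * g⁻¹) * (x * h⁻¹) := by
      rw [hn]; group
    rw [hcalc]
    exact N.mul_mem hkey hxr
end

section
/- Let G be a group, let N be a subgroup of G, and let g ∈ G be such that N ∩ gNg⁻¹ has finite index in gNg⁻¹. Then the set of subsets {gN ∩ Nh : h ∈ G} of G is finite. -/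
/-- Let `G` be a group, `N` a subgroup of `G`, and `g ∈ G` such that `N ∩ gNg⁻¹` has
finite index in `gNg⁻¹`.  Then the collection of subsets `{gN ∩ Nh : h ∈ G}` of `G`
is finite. -/
theorem finite_setOf_leftCoset_inter_rightCoset {G : Type*} [Group G] (N : Subgroup G)
    (g : G) (hfi : N.relIndex (Subgroup.map (MulAut.conj g).toMonoidHom N) ≠ 0) :
    Set.Finite {s : Set G | ∃ h : G,
      s = ((g * ·) '' (N : Set G)) ∩ ((· * h) '' (N : Set G))} := by
  set K : Subgroup G := Subgroup.map (MulAut.conj g⁻¹).toMonoidHom N with hKdef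
  have hrel : K.relIndex N ≠ 0 := by
    have := Subgroup.relIndex_comap (H := N) (MulAut.conj g).toMonoidHom N
    have h2 : N.comap (MulAut.conj g).toMonoidHom = K := by
      ext x; simp only [Subgroup.mem_comap, Subgroup.mem_map, hKdef,
        MulEquiv.coe_toMonoidHom, MulAut.conj_apply]
      constructor
      · intro h; exact ⟨g*x*g⁻¹, h, by group⟩
      · rintro ⟨y, hy, rfl⟩; simpa [mul_assoc] using hy
    rw [h2] at this
    rw [this]; exact hfi
  have hfin : Finite (N ⧸ K.subgroupOf N) := by
    have : (K.subgroupOf N).index ≠ 0 := hrel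
    exact (Nat.card_ne_zero.mp this).2
  set A : Set G := ((g * ·) '' (N : Set G)) ∩ ((· * g) '' (N : Set G)) with hA
  have hkey : ∀ k : G, k ∈ N → g * k * g⁻¹ ∈ N → (· * k) '' A = A := by
    intro k hk hgk
    ext x
    constructor
    · rintro ⟨y, ⟨⟨n1, hn1, rfl⟩, ⟨n2, hn2, h2⟩⟩, rfl⟩
      have hdz : n2 * g = g * n1 := h2
      refine ⟨⟨n1 * k, mul_mem hn1 hk, ?_⟩, ⟨n2 * (g * k * g⁻¹), mul_mem hn2 hgk, ?_⟩⟩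
      · show g * (n1 * k) = (g * n1) * k
        rw [mul_assoc]
      · show n2 * (g * k * g⁻¹) * g = (g * n1) * k
        calc n2 * (g * k * g⁻¹) * g = n2 * g * k := by group
          _ = g * n1 * k := by rw [hdz]
    · rintro ⟨⟨n1, hn1, rfl⟩, ⟨n2, hn2, h2⟩⟩
      have hdz : n2 * g = g * n1 := h2
      refine ⟨g * n1 * k⁻¹, ⟨⟨n1 * k⁻¹, mul_mem hn1 (inv_mem hk), ?_⟩,
        ⟨n2 * (g * k * g⁻¹)⁻¹, mul_mem hn2 (inv_mem hgk), ?_⟩⟩, by show g * n1 * k⁻¹ * k = g * n1; group⟩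
      · show g * (n1 * k⁻¹) = g * n1 * k⁻¹
        rw [mul_assoc]
      · show n2 * (g * k * g⁻¹)⁻¹ * g = g * n1 * k⁻¹
        calc n2 * (g * k * g⁻¹)⁻¹ * g = n2 * g * k⁻¹ := by group
          _ = g * n1 * k⁻¹ := by rw [hdz]
  have hwd : ∀ (a b : N), (QuotientGroup.leftRel (K.subgroupOf N)) a b →
      (· * (a : G)⁻¹) '' A = (· * (b : G)⁻¹) '' A := by
    intro a b hab
    rw [QuotientGroup.leftRel_apply] at hab
    have hmemN : ((a : G)⁻¹ * b) ∈ N := (a⁻¹ * b).2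
    have hmemK' : (((a⁻¹ * b : N) : G)) ∈ K := hab
    obtain ⟨m, hm, hmeq⟩ := hmemK'
    have hgk : g * ((a : G)⁻¹ * b) * g⁻¹ ∈ N := by
      have h3 : ((a⁻¹ * b : N) : G) = g⁻¹ * m * g := by
        simpa [MulAut.conj_apply, mul_assoc] using hmeq.symm
      rw [show ((a : G)⁻¹ * (b:G)) = ((a⁻¹ * b : N) : G) by simp, h3]
      simpa [mul_assoc] using hm
    have hst := hkey (((a : G)⁻¹ * b))⁻¹ (inv_mem hmemN) (by
      have h4 : g * ((a : G)⁻¹ * b)⁻¹ * g⁻¹ = (g * ((a : G)⁻¹ * b) * g⁻¹)⁻¹ := by group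
      rw [h4]; exact inv_mem hgk)
    calc (· * (a : G)⁻¹) '' A = (· * (a : G)⁻¹) '' ((· * ((a : G)⁻¹ * b)⁻¹) '' A) := by rw [hst]
      _ = (· * (b : G)⁻¹) '' A := by
          rw [← Set.image_comp]
          apply Set.image_congr'
          intro x
          show x * ((a : G)⁻¹ * b)⁻¹ * (a : G)⁻¹ = x * (b : G)⁻¹
          group
  let f : (N ⧸ K.subgroupOf N) → Set G := fun q => Quotient.liftOn' q
    (fun n => (· * (n : G)⁻¹) '' A) hwd
  apply Set.Finite.subset ((Set.finite_range f).insert ∅)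
  rintro s ⟨h, rfl⟩
  rcases Set.eq_empty_or_nonempty (((g * ·) '' (N : Set G)) ∩ ((· * h) '' (N : Set G))) with
    he | ⟨x, ⟨n1, hn1, hx1⟩, ⟨n2, hn2, hx2⟩⟩
  · rw [he]; exact Set.mem_insert _ _
  · have hx1' : g * n1 = x := hx1
    have hx2' : n2 * h = x := hx2
    right
    refine ⟨Quotient.mk'' ((⟨n1, hn1⟩ : N)⁻¹), ?_⟩
    show (· * ((⟨n1, hn1⟩ : N)⁻¹ : G)⁻¹) '' A = _
    simp only [InvMemClass.coe_inv, inv_inv]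
    have hkey2 : n2 * h = g * n1 := by rw [hx2', ← hx1']
    ext y
    constructor
    · rintro ⟨z, ⟨⟨c, hc, rfl⟩, ⟨d, hd, hz2⟩⟩, rfl⟩
      have hdz : d * g = g * c := hz2
      refine ⟨⟨c * n1, mul_mem hc hn1, ?_⟩, ⟨d * n2, mul_mem hd hn2, ?_⟩⟩
      · show g * (c * n1) = (g * c) * n1
        rw [mul_assoc]
      · show d * n2 * h = (g * c) * n1
        calc d * n2 * h = d * (n2 * h) := by rw [mul_assoc]
          _ = d * (g * n1) := by rw [hkey2]
          _ = (d * g) * n1 := by rw [mul_assoc]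
          _ = g * c * n1 := by rw [hdz]
    · rintro ⟨⟨a, ha, rfl⟩, ⟨b, hb, hy2⟩⟩
      have hby : b * h = g * a := hy2
      refine ⟨g * a * n1⁻¹, ⟨⟨a * n1⁻¹, mul_mem ha (inv_mem hn1), ?_⟩,
        ⟨b * n2⁻¹, mul_mem hb (inv_mem hn2), ?_⟩⟩, by show g * a * n1⁻¹ * n1 = g * a; group⟩
      · show g * (a * n1⁻¹) = g * a * n1⁻¹
        rw [mul_assoc]
      · show b * n2⁻¹ * g = g * a * n1⁻¹
        have hng : n2⁻¹ * g = h * n1⁻¹ := by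
          calc n2⁻¹ * g = n2⁻¹ * (g * n1) * n1⁻¹ := by group
            _ = n2⁻¹ * (n2 * h) * n1⁻¹ := by rw [hkey2]
            _ = h * n1⁻¹ := by group
        calc b * n2⁻¹ * g = b * (n2⁻¹ * g) := by rw [mul_assoc]
          _ = b * (h * n1⁻¹) := by rw [hng]
          _ = g * a * n1⁻¹ := by rw [← mul_assoc, hby]
end

section
/- Let G be a group, let R be a totally disconnected, locally compact Hausdorff topological group, let φ : G → R be a group homomorphism, let U be a compact open subgroup of R, and set K = φ⁻¹(U). Then K ∩ gKg⁻¹ has finite index in K for every g ∈ G. -/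
/-- Let `G` be a group, `R` a totally disconnected locally compact Hausdorff topological
group, `φ : G → R` a homomorphism, `U` a compact open subgroup of `R` and
`K = φ⁻¹(U)`.  Then `K ∩ gKg⁻¹` has finite index in `K` for every `g ∈ G`. -/
theorem relindex_conj_comap_ne_zero {G R : Type*} [Group G] [Group R]
    [TopologicalSpace R] [IsTopologicalGroup R] [T2Space R] [TotallyDisconnectedSpace R]
    [LocallyCompactSpace R] (φ : G →* R) (U : Subgroup R)
    (hUc : IsCompact (U : Set R)) (hUo : IsOpen (U : Set R)) :
    ∀ g : G,
      (Subgroup.map (MulAut.conj g).toMonoidHom (U.comap φ)).relIndex (U.comap φ) ≠ 0 := by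
  intro g
  set A : Subgroup R := U.map (MulAut.conj (φ g)).toMonoidHom with hA
  -- Step 1: the conjugate of the preimage is the preimage of the conjugate
  have h1 : Subgroup.map (MulAut.conj g).toMonoidHom (U.comap φ) = A.comap φ := by
    ext x
    simp only [Subgroup.mem_map, Subgroup.mem_comap, MulEquiv.coe_toMonoidHom,
      MulAut.conj_apply, hA]
    constructor
    · rintro ⟨y, hy, rfl⟩
      exact ⟨φ y, hy, by simp⟩
    · rintro ⟨z, hz, hzx⟩
      exact ⟨g⁻¹ * x * g, by simp [← hzx, hz, mul_assoc], by group⟩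
  -- Step 2: A is open
  have hAopen : IsOpen (A : Set R) := by
    have : (A : Set R) =
        ((Homeomorph.mulLeft (φ g)).trans (Homeomorph.mulRight (φ g)⁻¹)) '' (U : Set R) := by
      ext x
      simp [hA, Subgroup.mem_map, Set.mem_image, mul_assoc]
    rw [this]
    exact ((Homeomorph.mulLeft (φ g)).trans (Homeomorph.mulRight (φ g)⁻¹)).isOpen_image.mpr hUo
  -- Step 3: A has finite relative index in U, by compactness of U
  have hAU : A.relIndex U ≠ 0 := by
    have : CompactSpace U := isCompact_iff_compactSpace.mp hUc
    have hopen : IsOpen ((A.subgroupOf U : Subgroup U) : Set U) :=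
      hAopen.preimage continuous_subtype_val
    have : Finite (U ⧸ A.subgroupOf U) := Subgroup.quotient_finite_of_isOpen _ hopen
    exact Subgroup.index_ne_zero_of_finite
  rw [h1, Subgroup.relIndex_comap]
  exact fun h => hAU (Subgroup.relIndex_eq_zero_of_le_right
    (Subgroup.map_comap_le φ U) h)
end
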